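/- Let s₁,…,s_m be bucket sizes and let L ≥ max_i sᵢ. Run the scanning algorithm with bound L, producing consecutive groups G₁,…,G_t. For each i < t, let z_i be the total size of group G_i plus the size of the first bucket of G_{i+1} (so z_i > L), and let z = min_{i<t} z_i (z = ∞ if t = 1). Then for every bound L' with L ≤ L' < z, the scanning algorithm with bound L' produces exactly the same groups G₁,…,G_t. -/

import Mathlib

/-- The length of the longest prefix of `s` whose sum is at most `L`. -/
def greedyLen (L : ℕ) (s : List ℕ) : ℕ :=
  ((List.range (s.length + 1)).filter (fun j => (s.take j).sum ≤ L)).foldr max 0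

/-- The scanning (greedy) algorithm: repeatedly take as the next group the longest
prefix of the remaining buckets whose total size is at most `L`. -/
def scanGroups (L : ℕ) : List ℕ → List (List ℕ)
  | [] => []
  | a :: t =>
      (a :: t).take (max 1 (greedyLen L (a :: t))) ::
        scanGroups L ((a :: t).drop (max 1 (greedyLen L (a :: t))))
  termination_by s => s.length
  decreasing_by
    simp only [List.length_drop, List.length_cons]
    omega

lemma le_foldr_max {l : List ℕ} {a : ℕ} (h : a ∈ l) : a ≤ l.foldr max 0 := by
  induction l with
  | nil => simp at h
  | cons b t ih =>
    rcases List.mem_cons.1 h with h | h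
    · simp [h, Nat.le_max_left]
    · exact le_trans (ih h) (by simp)

lemma foldr_max_mem (l : List ℕ) : l.foldr max 0 = 0 ∨ l.foldr max 0 ∈ l := by
  induction l with
  | nil => simp
  | cons b t ih =>
    simp only [List.foldr]
    rcases Nat.le_total b (t.foldr max 0) with h | h
    · rw [max_eq_right h]
      rcases ih with h0 | hm
      · left; exact h0
      · right; exact List.mem_cons_of_mem _ hm
    · rw [max_eq_left h]; right; exact List.mem_cons_self

lemma greedyLen_le (L : ℕ) (s : List ℕ) : greedyLen L s ≤ s.length := by
  rcases foldr_max_mem (((List.range (s.length + 1)).filter (fun j => (s.take j).sum ≤ L))) with h | h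
  · unfold greedyLen; omega
  · have := (List.mem_filter.1 h).1
    have := List.mem_range.1 this
    unfold greedyLen; omega

lemma greedyLen_sum_le (L : ℕ) (s : List ℕ) : (s.take (greedyLen L s)).sum ≤ L := by
  rcases foldr_max_mem (((List.range (s.length + 1)).filter (fun j => (s.take j).sum ≤ L))) with h | h
  · unfold greedyLen; rw [h]; simp
  · have := (List.mem_filter.1 h).2
    simpa [greedyLen] using of_decide_eq_true this

lemma le_greedyLen (L : ℕ) (s : List ℕ) (j : ℕ) (hj : j ≤ s.length)
    (h : (s.take j).sum ≤ L) : j ≤ greedyLen L s := by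
  apply le_foldr_max
  simp only [List.mem_filter, List.mem_range]
  exact ⟨by omega, by simpa using h⟩

lemma take_sum_mono (s : List ℕ) {j j' : ℕ} (h : j ≤ j') :
    (s.take j).sum ≤ (s.take j').sum := by
  have h1 : s.take j = (s.take j').take j := by rw [List.take_take, min_eq_left h]
  rw [h1]
  have := List.sum_take_add_sum_drop (s.take j') j
  omega

lemma scanGroups_nil (L : ℕ) : scanGroups L [] = [] := by
  rw [scanGroups]

lemma scanGroups_cons (L a : ℕ) (t : List ℕ) :
    scanGroups L (a :: t) = (a :: t).take (max 1 (greedyLen L (a :: t))) ::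
      scanGroups L ((a :: t).drop (max 1 (greedyLen L (a :: t)))) := by
  rw [scanGroups]

lemma scan_aux (n : ℕ) : ∀ (s : List ℕ), s.length ≤ n → ∀ (L : ℕ), (∀ x ∈ s, x ≤ L) →
    ∀ (L' : ℕ), L ≤ L' →
    (∀ i : ℕ, i + 1 < (scanGroups L s).length →
        L' < ((scanGroups L s).getD i []).sum + ((scanGroups L s).getD (i + 1) []).headI) →
    scanGroups L' s = scanGroups L s := by
  induction n with
  | zero =>
    intro s hs L _ L' _ _
    interval_cases h : s.length
    · rw [List.length_eq_zero_iff] at h; subst h; rw [scanGroups_nil, scanGroups_nil]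
  | succ n ih =>
    intro s hs L hmax L' hLL' hz
    match s with
    | [] => rw [scanGroups_nil, scanGroups_nil]
    | a :: t =>
      set s := a :: t with hs_def
      set k := max 1 (greedyLen L s) with hk_def
      have hk1 : 1 ≤ k := le_max_left _ _
      have hlen1 : 1 ≤ s.length := by simp [hs_def]
      have hklen : k ≤ s.length := by
        have := greedyLen_le L s
        omega
      -- sum of take k is ≤ L'
      have hsum : (s.take k).sum ≤ L' := by
        rcases Nat.eq_zero_or_pos (greedyLen L s) with h0 | hp
        · have hk1' : k = 1 := by omega
          rw [hk1']
          have : (s.take 1).sum = a := by simp [hs_def]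
          rw [this]
          exact le_trans (hmax a (by simp [hs_def])) hLL'
        · have hkg : k = greedyLen L s := by omega
          rw [hkg]
          exact le_trans (greedyLen_sum_le L s) hLL'
      -- scanGroups L s unfolded
      have hSG : scanGroups L s = s.take k :: scanGroups L (s.drop k) := scanGroups_cons L a t
      -- greedyLen L' s = k
      have hg_ge : k ≤ greedyLen L' s := le_greedyLen L' s k hklen hsum
      have hg_le : greedyLen L' s ≤ k := by
        rcases eq_or_lt_of_le hklen with heq | hlt
        · have := greedyLen_le L' s; omega
        · -- k < s.length, use hz 0
          have hdrop : s.drop k ≠ [] := by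
            intro h
            have := congrArg List.length h
            simp at this
            omega
          obtain ⟨b, t', hbt⟩ := List.exists_cons_of_ne_nil hdrop
          have hlen2 : 2 ≤ (scanGroups L s).length := by
            rw [hSG, hbt, scanGroups_cons]
            simp
          have hz0 := hz 0 (by omega)
          rw [hSG] at hz0
          simp only [List.getD_cons_zero, List.getD_cons_succ] at hz0
          have hget1 : ((scanGroups L (s.drop k)).getD 0 []).headI = b := by
            rw [hbt, scanGroups_cons]
            simp only [List.getD_cons_zero]
            rcases Nat.exists_eq_add_of_le (le_max_left 1 (greedyLen L (b :: t'))) with ⟨m, hm⟩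
            have hm' : max 1 (greedyLen L (b :: t')) = m + 1 := by omega
            rw [hm', List.take_succ_cons]
            rfl
          rw [hget1] at hz0
          -- (s.take (k+1)).sum = (s.take k).sum + b
          have htake1 : (s.take (k+1)).sum = (s.take k).sum + b := by
            have : s.take (k+1) = s.take k ++ [b] := by
              rw [List.take_succ]
              congr 1
              have hsk : s[k]? = some b := by
                have h := @List.getElem?_drop _ s k 0
                rw [hbt] at h
                simpa using h.symm
              rw [hsk]
              rfl
            rw [this]
            simp
          have hlt' : L' < (s.take (k+1)).sum := by omega
          by_contra hcon
          push_neg at hcon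
          have : (s.take (k+1)).sum ≤ (s.take (greedyLen L' s)).sum :=
            take_sum_mono s (by omega)
          have := greedyLen_sum_le L' s
          omega
      have hg' : max 1 (greedyLen L' s) = k := by omega
      -- unfold scanGroups L' s
      have hSG' : scanGroups L' s = s.take k :: scanGroups L' (s.drop k) := by
        rw [scanGroups_cons L' a t, ← hs_def, hg']
      rw [hSG', hSG]
      congr 1
      -- apply ih to the tail
      apply ih
      · have : s.length ≤ n + 1 := hs
        simp only [List.length_drop]
        omega
      · intro x hx
        exact hmax x (List.mem_of_mem_drop hx)
      · exact hLL'
      · intro i hi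
        have hz' := hz (i+1) (by rw [hSG]; simpa using Nat.succ_lt_succ hi)
        rw [hSG] at hz'
        simpa using hz'

/-- Run the scanning algorithm with bound `L ≥ max_i sᵢ`, producing groups `G₁,…,G_t`.
For each `i < t` let `z_i` be the total size of `G_i` plus the size of the first bucket
of `G_{i+1}`, and let `z = min_{i<t} z_i` (`z = ∞` if `t = 1`).  Then every bound `L'`
with `L ≤ L' < z` (i.e. `L ≤ L'` and `L' < z_i` for all applicable `i`) makes the
scanning algorithm produce exactly the same groups. -/
theorem scanning_same_groups_below_z
    (s : List ℕ) (L : ℕ) (hmax : ∀ x ∈ s, x ≤ L)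
    (L' : ℕ) (hLL' : L ≤ L')
    (hz : ∀ i : ℕ, i + 1 < (scanGroups L s).length →
        L' < ((scanGroups L s).getD i []).sum + ((scanGroups L s).getD (i + 1) []).headI) :
    scanGroups L' s = scanGroups L s :=
  scan_aux s.length s le_rfl L hmax L' hLL' hz
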